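/- Let Q ≥ 1, let 0 < μ_1 < μ_2 < ⋯ < μ_Q, and let α, α' > 0. Suppose (w_ℓ)_{ℓ=1}^Q and (w'_ℓ)_{ℓ=1}^Q are nonnegative weights each summing to 1, with w_Q > 0 and w'_Q > 0, such that Σ_{ℓ=1}^Q w_ℓ · Pois(y; μ_ℓ + α) = Σ_{ℓ=1}^Q w'_ℓ · Pois(y; μ_ℓ + α') for all y ∈ ℕ. Then α = α' and w_ℓ = w'_ℓ for all ℓ. -/

import Mathlib

/-- Poisson pmf `Pois(x; λ) = e^{-λ} λ^x / x!`. -/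
noncomputable def pois (lam : ℝ) (x : ℕ) : ℝ :=
  Real.exp (-lam) * lam ^ x / (Nat.factorial x : ℝ)

/-- Rewriting a mixture term after multiplying by `y! / Λ^y`. -/
lemma pois_term_rw (c lam Λ : ℝ) (hΛ : 0 < Λ) (y : ℕ) :
    c * pois lam y * (Nat.factorial y : ℝ) / Λ ^ y
      = (c * Real.exp (-lam)) * (lam / Λ) ^ y := by
  have hfac : (Nat.factorial y : ℝ) ≠ 0 := by
    exact_mod_cast (Nat.factorial_pos y).ne'
  have hΛy : (Λ : ℝ) ^ y ≠ 0 := pow_ne_zero _ hΛ.ne'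
  rw [pois, div_pow]
  field_simp

/-- If the shift on the left ("unprimed") side is strictly smaller, we get a
contradiction by comparing asymptotics of the pmf after renormalizing by
`y! / (μ_last + α')^y`. -/
lemma shift_lt_absurd {n : ℕ} (μ : Fin (n + 1) → ℝ)
    (hμpos : ∀ q, 0 < μ q) (hμmono : StrictMono μ)
    (α α' : ℝ) (hα : 0 < α) (hα' : 0 < α') (hlt : α < α')
    (w w' : Fin (n + 1) → ℝ)
    (hw'Q : 0 < w' (Fin.last n))
    (heq : ∀ y : ℕ,
      ∑ ℓ, w ℓ * pois (μ ℓ + α) y = ∑ ℓ, w' ℓ * pois (μ ℓ + α') y) : False := by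
  set Λ : ℝ := μ (Fin.last n) + α' with hΛdef
  have hΛ : 0 < Λ := by have := hμpos (Fin.last n); rw [hΛdef]; linarith
  set F : ℕ → ℝ := fun y =>
    (∑ ℓ, w ℓ * pois (μ ℓ + α) y) * (Nat.factorial y : ℝ) / Λ ^ y with hFdef
  -- rewrite F as a sum of geometric terms with ratios < 1
  have hF1 : ∀ y : ℕ, F y
      = ∑ ℓ, (w ℓ * Real.exp (-(μ ℓ + α))) * ((μ ℓ + α) / Λ) ^ y := by
    intro y
    simp only [hFdef, Finset.sum_mul, Finset.sum_div]
    exact Finset.sum_congr rfl fun ℓ _ => pois_term_rw _ _ _ hΛ y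
  have hF2 : ∀ y : ℕ, F y
      = ∑ ℓ, (w' ℓ * Real.exp (-(μ ℓ + α'))) * ((μ ℓ + α') / Λ) ^ y := by
    intro y
    simp only [hFdef]
    rw [heq y]
    simp only [Finset.sum_mul, Finset.sum_div]
    exact Finset.sum_congr rfl fun ℓ _ => pois_term_rw _ _ _ hΛ y
  -- F tends to 0
  have hlim0 : Filter.Tendsto F Filter.atTop (nhds 0) := by
    have : Filter.Tendsto
        (fun y : ℕ => ∑ ℓ, (w ℓ * Real.exp (-(μ ℓ + α))) * ((μ ℓ + α) / Λ) ^ y)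
        Filter.atTop (nhds (∑ ℓ : Fin (n + 1), (0 : ℝ))) := by
      refine tendsto_finset_sum _ fun ℓ _ => ?_
      have hr0 : (0 : ℝ) ≤ (μ ℓ + α) / Λ := by
        have := hμpos ℓ
        exact div_nonneg (by linarith) hΛ.le
      have hr1 : (μ ℓ + α) / Λ < 1 := by
        rw [div_lt_one hΛ]
        have h1 : μ ℓ ≤ μ (Fin.last n) := hμmono.monotone (Fin.le_last ℓ)
        linarith
      have := (tendsto_pow_atTop_nhds_zero_of_lt_one hr0 hr1).const_mul
        (w ℓ * Real.exp (-(μ ℓ + α)))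
      simpa using this
    simp only [Finset.sum_const_zero] at this
    exact Filter.Tendsto.congr (fun y => (hF1 y).symm) this
  -- F tends to w' last * exp (-Λ)
  have hlimc : Filter.Tendsto F Filter.atTop
      (nhds (w' (Fin.last n) * Real.exp (-Λ))) := by
    have hsplit : ∀ y : ℕ, F y
        = (∑ i : Fin n, (w' i.castSucc * Real.exp (-(μ i.castSucc + α')))
            * ((μ i.castSucc + α') / Λ) ^ y)
          + w' (Fin.last n) * Real.exp (-Λ) := by
      intro y
      rw [hF2 y, Fin.sum_univ_castSucc]
      have : (μ (Fin.last n) + α') / Λ = 1 := div_self hΛ.ne'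
      rw [this, one_pow, mul_one, hΛdef]
    have hmain : Filter.Tendsto
        (fun y : ℕ => (∑ i : Fin n, (w' i.castSucc * Real.exp (-(μ i.castSucc + α')))
            * ((μ i.castSucc + α') / Λ) ^ y)
          + w' (Fin.last n) * Real.exp (-Λ))
        Filter.atTop (nhds (0 + w' (Fin.last n) * Real.exp (-Λ))) := by
      refine Filter.Tendsto.add ?_ tendsto_const_nhds
      have : Filter.Tendsto
          (fun y : ℕ => ∑ i : Fin n, (w' i.castSucc * Real.exp (-(μ i.castSucc + α')))
            * ((μ i.castSucc + α') / Λ) ^ y)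
          Filter.atTop (nhds (∑ _i : Fin n, (0 : ℝ))) := by
        refine tendsto_finset_sum _ fun i _ => ?_
        have hr0 : (0 : ℝ) ≤ (μ i.castSucc + α') / Λ := by
          have := hμpos i.castSucc
          exact div_nonneg (by linarith) hΛ.le
        have hr1 : (μ i.castSucc + α') / Λ < 1 := by
          rw [div_lt_one hΛ]
          have h1 : μ i.castSucc < μ (Fin.last n) :=
            hμmono (Fin.castSucc_lt_last i)
          linarith
        have := (tendsto_pow_atTop_nhds_zero_of_lt_one hr0 hr1).const_mul
          (w' i.castSucc * Real.exp (-(μ i.castSucc + α')))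
        simpa using this
      simpa using this
    rw [zero_add] at hmain
    exact Filter.Tendsto.congr (fun y => (hsplit y).symm) hmain
  have h0 : (0 : ℝ) = w' (Fin.last n) * Real.exp (-Λ) :=
    tendsto_nhds_unique hlim0 hlimc
  have : 0 < w' (Fin.last n) * Real.exp (-Λ) := by positivity
  linarith

/-- Identification of the shift in a Poisson mixture with
translated rates: if `0 < μ_1 < ⋯ < μ_Q`, `α, α' > 0`, and `(w_ℓ)`, `(w'_ℓ)`
are nonnegative weights summing to 1 with `w_Q > 0` and `w'_Q > 0`, such that
`∑_ℓ w_ℓ Pois(y; μ_ℓ + α) = ∑_ℓ w'_ℓ Pois(y; μ_ℓ + α')` for all `y ∈ ℕ`,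
then `α = α'` and `w = w'`. -/
theorem poisson_mixture_shift_identifiable {Q : ℕ} (hQ : 1 ≤ Q)
    (μ : Fin Q → ℝ) (hμpos : ∀ q, 0 < μ q) (hμmono : StrictMono μ)
    (α α' : ℝ) (hα : 0 < α) (hα' : 0 < α')
    (w w' : Fin Q → ℝ)
    (hw : ∀ ℓ, 0 ≤ w ℓ) (hw' : ∀ ℓ, 0 ≤ w' ℓ)
    (hwsum : ∑ ℓ, w ℓ = 1) (hw'sum : ∑ ℓ, w' ℓ = 1)
    (hwQ : 0 < w ⟨Q - 1, by omega⟩) (hw'Q : 0 < w' ⟨Q - 1, by omega⟩)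
    (heq : ∀ y : ℕ,
      ∑ ℓ, w ℓ * pois (μ ℓ + α) y = ∑ ℓ, w' ℓ * pois (μ ℓ + α') y) :
    α = α' ∧ w = w' := by
  obtain ⟨n, rfl⟩ : ∃ n, Q = n + 1 := ⟨Q - 1, by omega⟩
  have hlast : (⟨n + 1 - 1, by omega⟩ : Fin (n + 1)) = Fin.last n := rfl
  rw [hlast] at hwQ hw'Q
  have hαα' : α = α' := by
    rcases lt_trichotomy α α' with h | h | h
    · exact absurd (shift_lt_absurd μ hμpos hμmono α α' hα hα' h w w' hw'Q heq) id
    · exact h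
    · exact absurd (shift_lt_absurd μ hμpos hμmono α' α hα' hα h w' w hwQ
        (fun y => (heq y).symm)) id
  subst hαα'
  refine ⟨rfl, ?_⟩
  -- Vandermonde argument for the weights
  set d : Fin (n + 1) → ℝ :=
    fun ℓ => (w ℓ - w' ℓ) * Real.exp (-(μ ℓ + α)) with hddef
  have hf : Function.Injective (fun ℓ : Fin (n + 1) => μ ℓ + α) := by
    intro a b hab
    exact hμmono.injective (by simpa using hab)
  have hd0 : d = 0 := by
    refine Matrix.eq_zero_of_forall_pow_sum_mul_pow_eq_zero hf fun i => ?_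
    have h := heq (i : ℕ)
    have hfac : (Nat.factorial (i : ℕ) : ℝ) ≠ 0 := by
      exact_mod_cast (Nat.factorial_pos _).ne'
    have hsum : ∑ ℓ, d ℓ * (μ ℓ + α) ^ (i : ℕ) / (Nat.factorial (i : ℕ) : ℝ)
        = 0 := by
      have : ∑ ℓ, (w ℓ - w' ℓ) * pois (μ ℓ + α) (i : ℕ) = 0 := by
        simp only [sub_mul, Finset.sum_sub_distrib]
        rw [h, sub_self]
      rw [← this]
      refine Finset.sum_congr rfl fun ℓ _ => ?_
      rw [hddef, pois]
      ring
    rw [← Finset.sum_div, div_eq_zero_iff] at hsum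
    rcases hsum with hsum | hsum
    · exact hsum
    · exact absurd hsum hfac
  funext ℓ
  have hℓ : d ℓ = 0 := by rw [hd0]; rfl
  have hexp : Real.exp (-(μ ℓ + α)) ≠ 0 := (Real.exp_pos _).ne'
  have := mul_eq_zero.mp hℓ
  rcases this with h | h
  · linarith [sub_eq_zero.mp h]
  · exact absurd h hexp
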